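/- Let G be a P5-free graph (G contains no induced path on 5 vertices). Let Q1 and Q2 be paths in G of order at least 3 sharing a common endpoint a, such that Q1 − a and Q2 − a are vertex-disjoint. If Q1 is an induced path of G, then either some vertex of Q1 − a is adjacent to some vertex of Q2 − a, or every vertex of Q2 other than a is adjacent to a. -/

import Mathlib

open SimpleGraph

variable {V : Type*} [Fintype V] [DecidableEq V]

/-- `p 0, p 1, ..., p (n-1)` is a path of order `n` in `G`. -/
def IsPathOn (G : SimpleGraph V) (n : ℕ) (p : ℕ → V) : Prop :=
  (∀ i j, i < n → j < n → p i = p j → i = j) ∧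
  (∀ i, i + 1 < n → G.Adj (p i) (p (i + 1)))

/-- An induced path of order `n` in `G`. -/
def IsInducedPathOn (G : SimpleGraph V) (n : ℕ) (p : ℕ → V) : Prop :=
  IsPathOn G n p ∧ ∀ i j, i < n → j < n → G.Adj (p i) (p j) → (i + 1 = j ∨ j + 1 = i)

/-- `G` contains no induced path on 5 vertices. -/
def P5Free (G : SimpleGraph V) : Prop := ¬ ∃ p : ℕ → V, IsInducedPathOn G 5 p

/-- `G` contains no induced `K₄` minus an edge. -/
def K4mFree (G : SimpleGraph V) : Prop :=
  ¬ ∃ a b c d : V, a ≠ b ∧ a ≠ c ∧ a ≠ d ∧ b ≠ c ∧ b ≠ d ∧ c ≠ d ∧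
    G.Adj a b ∧ G.Adj a c ∧ G.Adj a d ∧ G.Adj b c ∧ G.Adj b d ∧ ¬ G.Adj c d

/-- `G` contains no induced `W*` (two triangles `abc`, `def` joined by the edge `cd`). -/
def WStarFree (G : SimpleGraph V) : Prop :=
  ¬ ∃ a b c d e f : V, List.Nodup [a, b, c, d, e, f] ∧
    G.Adj a b ∧ G.Adj b c ∧ G.Adj a c ∧ G.Adj d e ∧ G.Adj e f ∧ G.Adj d f ∧ G.Adj c d ∧
    ¬ G.Adj a d ∧ ¬ G.Adj a e ∧ ¬ G.Adj a f ∧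
    ¬ G.Adj b d ∧ ¬ G.Adj b e ∧ ¬ G.Adj b f ∧ ¬ G.Adj c e ∧ ¬ G.Adj c f

/-- `G` contains no induced paw (triangle `abc` with pendant edge `cd`). -/
def Z1Free (G : SimpleGraph V) : Prop :=
  ¬ ∃ a b c d : V, List.Nodup [a, b, c, d] ∧
    G.Adj a b ∧ G.Adj b c ∧ G.Adj a c ∧ G.Adj c d ∧ ¬ G.Adj a d ∧ ¬ G.Adj b d

/-- An (oriented) cycle of length `n` in `G`, as an injective map `ZMod n → V`
with consecutive vertices adjacent. -/
def IsCycleOn (G : SimpleGraph V) (n : ℕ) (c : ZMod n → V) : Prop :=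
  3 ≤ n ∧ Function.Injective c ∧ ∀ i, G.Adj (c i) (c (i + 1))

/-- A longest cycle of `G`. -/
def IsLongestCycle (G : SimpleGraph V) (n : ℕ) (c : ZMod n → V) : Prop :=
  IsCycleOn G n c ∧ ∀ (m : ℕ) (d : ZMod m → V), IsCycleOn G m d → m ≤ n

/-- A dominating cycle: every edge of `G` is incident with a vertex of the cycle. -/
def DominatingCycle (G : SimpleGraph V) (n : ℕ) (c : ZMod n → V) : Prop :=
  IsCycleOn G n c ∧ ∀ u v : V, G.Adj u v → u ∈ Set.range c ∨ v ∈ Set.range c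

/-- `H` is (the vertex set of) a connected component of `G - R`. -/
def IsCompOff (G : SimpleGraph V) (R : Set V) (H : Set V) : Prop :=
  H.Nonempty ∧ Disjoint H R ∧ (G.induce H).Connected ∧
  ∀ u v : V, u ∈ H → v ∉ H → v ∉ R → ¬ G.Adj u v

/-- `μ`: the maximum order of a component of `G - R`. -/
noncomputable def muC (G : SimpleGraph V) (R : Set V) : ℕ :=
  sSup {k | ∃ H : Set V, IsCompOff G R H ∧ H.ncard = k}

/-- `ω`: the number of components of `G - R` of maximum order. -/
noncomputable def omegaC (G : SimpleGraph V) (R : Set V) : ℕ :=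
  {H : Set V | IsCompOff G R H ∧ H.ncard = muC G R}.ncard

/-- `G` is 2-connected: at least 3 vertices, connected, and removing any
vertex leaves it connected. -/
def TwoConnected (G : SimpleGraph V) : Prop :=
  3 ≤ Fintype.card V ∧ G.Connected ∧
  ∀ v : V, (G.induce ({v}ᶜ : Set V)).Connected

/-- The set of indices of `ZMod n` encountered going from `s` to `t` in the
positive direction (including both `s` and `t`). -/
def seg (n : ℕ) (s t : ZMod n) : Set (ZMod n) :=
  {x | ∃ k : ℕ, x = s + (k : ZMod n) ∧ ∀ m : ℕ, m < k → s + (m : ZMod n) ≠ t}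

/-- `G` is complete multipartite: the vertices partition into classes of an
equivalence relation which are independent, with all edges between classes. -/
def CompleteMultipartite (G : SimpleGraph V) : Prop :=
  ∃ r : V → V → Prop, Equivalence r ∧ ∀ u v : V, u ≠ v → (G.Adj u v ↔ ¬ r u v)

/-- A `C`-path (for `R = V(C)`): a path of order at least 2 whose ends lie in
`R` and whose internal vertices avoid `R`. -/
def IsCPath (G : SimpleGraph V) (R : Set V) (m : ℕ) (p : ℕ → V) : Prop :=
  2 ≤ m ∧ IsPathOn G m p ∧ p 0 ∈ R ∧ p (m - 1) ∈ R ∧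
  ∀ i, 0 < i → i < m - 1 → p i ∉ R

lemma no_induced_p5 {G : SimpleGraph V} (hG : P5Free G) (v0 v1 v2 v3 v4 : V)
    (a01 : G.Adj v0 v1) (a12 : G.Adj v1 v2) (a23 : G.Adj v2 v3) (a34 : G.Adj v3 v4)
    (n02 : ¬ G.Adj v0 v2) (n03 : ¬ G.Adj v0 v3) (n04 : ¬ G.Adj v0 v4)
    (n13 : ¬ G.Adj v1 v3) (n14 : ¬ G.Adj v1 v4) (n24 : ¬ G.Adj v2 v4)
    (d02 : v0 ≠ v2) (d03 : v0 ≠ v3) (d04 : v0 ≠ v4)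
    (d13 : v1 ≠ v3) (d14 : v1 ≠ v4) (d24 : v2 ≠ v4) : False := by
  have d01 := a01.ne
  have d12 := a12.ne
  have d23 := a23.ne
  have d34 := a34.ne
  have n20 : ¬ G.Adj v2 v0 := fun h => n02 h.symm
  have n30 : ¬ G.Adj v3 v0 := fun h => n03 h.symm
  have n40 : ¬ G.Adj v4 v0 := fun h => n04 h.symm
  have n31 : ¬ G.Adj v3 v1 := fun h => n13 h.symm
  have n41 : ¬ G.Adj v4 v1 := fun h => n14 h.symm
  have n42 : ¬ G.Adj v4 v2 := fun h => n24 h.symm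
  have l0 : ¬ G.Adj v0 v0 := G.loopless.irrefl v0
  have l1 : ¬ G.Adj v1 v1 := G.loopless.irrefl v1
  have l2 : ¬ G.Adj v2 v2 := G.loopless.irrefl v2
  have l3 : ¬ G.Adj v3 v3 := G.loopless.irrefl v3
  have l4 : ¬ G.Adj v4 v4 := G.loopless.irrefl v4
  let p : ℕ → V := fun k => if k = 0 then v0 else if k = 1 then v1 else if k = 2 then v2
    else if k = 3 then v3 else v4
  have e0 : p 0 = v0 := rfl
  have e1 : p 1 = v1 := rfl
  have e2 : p 2 = v2 := rfl
  have e3 : p 3 = v3 := rfl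
  have e4 : p 4 = v4 := rfl
  have h1 : ∀ i j, i < 5 → j < 5 → p i = p j → i = j := by
    intro i j hi hj h
    interval_cases i <;> interval_cases j <;>
      simp only [e0, e1, e2, e3, e4] at h <;> simp_all
  have h2 : ∀ i, i + 1 < 5 → G.Adj (p i) (p (i + 1)) := by
    intro i hi
    have hi' : i < 4 := by omega
    interval_cases i <;> simp only [show (0:ℕ)+1 = 1 from rfl, show (1:ℕ)+1 = 2 from rfl,
      show (2:ℕ)+1 = 3 from rfl, show (3:ℕ)+1 = 4 from rfl, e0, e1, e2, e3, e4] <;>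
      assumption
  have h3 : ∀ i j, i < 5 → j < 5 → G.Adj (p i) (p j) → (i + 1 = j ∨ j + 1 = i) := by
    intro i j hi hj h
    interval_cases i <;> interval_cases j <;>
      simp only [e0, e1, e2, e3, e4] at h <;> first | omega | simp_all
  exact hG ⟨p, ⟨h1, h2⟩, h3⟩

theorem stmt_0 (G : SimpleGraph V) (hG : P5Free G)
    (n1 n2 : ℕ) (q1 q2 : ℕ → V) (a : V)
    (hq1 : IsPathOn G n1 q1) (hq2 : IsPathOn G n2 q2)
    (hn1 : 3 ≤ n1) (hn2 : 3 ≤ n2)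
    (ha1 : q1 0 = a) (ha2 : q2 0 = a)
    (hdisj : ∀ i j, 0 < i → i < n1 → 0 < j → j < n2 → q1 i ≠ q2 j)
    (hind : IsInducedPathOn G n1 q1) :
    (∃ i j, 0 < i ∧ i < n1 ∧ 0 < j ∧ j < n2 ∧ G.Adj (q1 i) (q2 j)) ∨
    (∀ j, 0 < j → j < n2 → G.Adj a (q2 j)) := by
  by_cases hcase : ∃ i j, 0 < i ∧ i < n1 ∧ 0 < j ∧ j < n2 ∧ G.Adj (q1 i) (q2 j)
  · exact Or.inl hcase
  · right
    push_neg at hcase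
    intro j hj hjn
    induction j with
    | zero => omega
    | succ k ih =>
      rcases Nat.eq_zero_or_pos k with hk | hk
      · subst hk
        have := hq2.2 0 (by omega)
        rwa [ha2] at this
      · have hak : G.Adj a (q2 k) := ih hk (by omega)
        by_contra hna
        refine no_induced_p5 hG (q1 2) (q1 1) a (q2 k) (q2 (k + 1))
          ?_ ?_ hak (hq2.2 k (by omega)) ?_ ?_ ?_ ?_ ?_ hna ?_ ?_ ?_ ?_ ?_ ?_
        · exact (hq1.2 1 (by omega)).symm
        · rw [← ha1]; exact (hq1.2 0 (by omega)).symm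
        · rw [← ha1]
          intro h
          rcases hind.2 2 0 (by omega) (by omega) h with h' | h' <;> omega
        · exact hcase 2 k (by omega) (by omega) hk (by omega)
        · exact hcase 2 (k + 1) (by omega) (by omega) (by omega) hjn
        · exact hcase 1 k (by omega) (by omega) hk (by omega)
        · exact hcase 1 (k + 1) (by omega) (by omega) (by omega) hjn
        · rw [← ha1]; intro h; have := hq1.1 2 0 (by omega) (by omega) h; omega
        · exact hdisj 2 k (by omega) (by omega) hk (by omega)
        · exact hdisj 2 (k + 1) (by omega) (by omega) (by omega) hjn
        · exact hdisj 1 k (by omega) (by omega) hk (by omega)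
        · exact hdisj 1 (k + 1) (by omega) (by omega) (by omega) hjn
        · rw [← ha2]; intro h; have := hq2.1 0 (k + 1) (by omega) hjn h; omega
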